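/- Let G be a finite simple graph and let P_1, ..., P_k be a partition of V(G) into modules, i.e., such that for each pair i ≠ j, between P_i and P_j there are either all possible edges or no edges in G. Let c_i = χ(G[P_i]) be the chromatic number of the subgraph induced by P_i, and let G' be the graph on vertex set {(i, j) : 1 ≤ i ≤ k, 1 ≤ j ≤ c_i} in which (i, j) and (i, j') are adjacent for all j ≠ j', and (i, j) and (i', j') with i ≠ i' are adjacent if and only if there are (all) edges between P_i and P_{i'} in G. Then χ(G') = χ(G). -/

import Mathlib

/-- Given a partition of the vertices of `G` into modules `P 1, …, P k` and numbers
`c 1, …, c k`, the graph obtained by replacing each module `P i` by a clique on `c i`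
vertices, preserving the all-or-no adjacency pattern between distinct parts: vertices
`(i, j)` and `(i, j')` with `j ≠ j'` are adjacent, and `(i, j)` and `(i', j')` with
`i ≠ i'` are adjacent iff all edges between `P i` and `P i'` are present in `G`. -/
def moduleReplacementGraph {V : Type*} (G : SimpleGraph V) {k : ℕ}
    (P : Fin k → Set V) (c : Fin k → ℕ) : SimpleGraph ((i : Fin k) × Fin (c i)) where
  Adj p q := p ≠ q ∧ (p.1 = q.1 ∨ ∀ u ∈ P p.1, ∀ v ∈ P q.1, G.Adj u v)
  symm := by
    constructor
    rintro p q ⟨hne, h⟩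
    refine ⟨hne.symm, ?_⟩
    rcases h with h | h
    · exact Or.inl h.symm
    · exact Or.inr fun u hu v hv => (h v hv u hu).symm
  loopless := by
    constructor
    intro p h
    exact h.1 rfl

/-- Let `G` be a finite simple graph, let `P 1, …, P k` be a partition of `V(G)` into
modules (between any two distinct parts there are all possible edges or no edges), and
let `c i = χ(G[P i])`.  Then the graph `G'` obtained from `G` by replacing each module
`P i` by a clique on `c i` vertices satisfies `χ(G') = χ(G)`. -/
theorem chromaticNumber_moduleReplacement {V : Type*} [Fintype V] (G : SimpleGraph V)
    (k : ℕ) (P : Fin k → Set V)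
    (hpart : ∀ v : V, ∃! i : Fin k, v ∈ P i)
    (hhom : ∀ i j : Fin k, i ≠ j →
      (∀ u ∈ P i, ∀ v ∈ P j, G.Adj u v) ∨ (∀ u ∈ P i, ∀ v ∈ P j, ¬ G.Adj u v))
    (c : Fin k → ℕ)
    (hc : ∀ i : Fin k, (G.induce (P i)).chromaticNumber = (c i : ℕ∞)) :
    (moduleReplacementGraph G P c).chromaticNumber = G.chromaticNumber := by
  classical
  set G' := moduleReplacementGraph G P c with hG'
  let idx : V → Fin k := fun v => (hpart v).exists.choose
  have hidx : ∀ v, v ∈ P (idx v) := fun v => (hpart v).exists.choose_spec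
  have key : ∀ n, G.Colorable n ↔ G'.Colorable n := by
    intro n
    constructor
    · -- G colorable → G' colorable
      rintro ⟨C⟩
      let S : Fin k → Finset (Fin n) := fun i => Finset.univ.image (fun v : P i => C v)
      have hcard : ∀ i, c i ≤ (S i).card := by
        intro i
        let D : (G.induce (P i)).Coloring (S i) :=
          SimpleGraph.Coloring.mk
            (fun v => ⟨C v, Finset.mem_image_of_mem _ (Finset.mem_univ v)⟩)
            (by
              rintro ⟨u, hu⟩ ⟨v, hv⟩ hadj h
              exact C.valid hadj (Subtype.ext_iff.mp h))
        have hcol : (G.induce (P i)).Colorable (S i).card := by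
          simpa using D.colorable
        have h2 := hcol.chromaticNumber_le
        rw [hc i] at h2
        exact_mod_cast h2
      let g : (i : Fin k) → Fin (c i) → Fin n := fun i j =>
        ((S i).equivFin.symm (Fin.castLE (hcard i) j) : Fin n)
      have hgS : ∀ i j, g i j ∈ S i := fun i j => ((S i).equivFin.symm _).2
      have hginj : ∀ i, Function.Injective (g i) := by
        intro i a b hab
        have h1 : (S i).equivFin.symm (Fin.castLE (hcard i) a)
            = (S i).equivFin.symm (Fin.castLE (hcard i) b) := Subtype.ext hab
        have h2 := (S i).equivFin.symm.injective h1
        exact Fin.castLE_injective _ h2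
      refine ⟨SimpleGraph.Coloring.mk (fun p => g p.1 p.2) ?_⟩
      rintro ⟨i, j⟩ ⟨i', j'⟩ ⟨hne, hor⟩ hEq
      rcases eq_or_ne i i' with rfl | hii
      · cases hginj i hEq
        exact hne rfl
      · rcases hor with h | h
        · exact hii h
        · obtain ⟨u, -, hu⟩ := Finset.mem_image.mp (hgS i j)
          obtain ⟨v, -, hv⟩ := Finset.mem_image.mp (hgS i' j')
          have hadj := h u u.2 v v.2
          exact C.valid hadj (by rw [hu, hv]; exact hEq)
    · -- G' colorable → G colorable
      rintro ⟨C'⟩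
      have hcol : ∀ i, (G.induce (P i)).Colorable (c i) := fun i =>
        SimpleGraph.chromaticNumber_le_iff_colorable.mp (le_of_eq (hc i))
      let f : (i : Fin k) → (G.induce (P i)).Coloring (Fin (c i)) := fun i => (hcol i).some
      let F : V → (i : Fin k) × Fin (c i) := fun v => ⟨idx v, f (idx v) ⟨v, hidx v⟩⟩
      have Feq : ∀ (v : V) (i : Fin k) (h : idx v = i), F v = ⟨i, f i ⟨v, h ▸ hidx v⟩⟩ := by
        rintro v i rfl; rfl
      have hF : ∀ u v, G.Adj u v → G'.Adj (F u) (F v) := by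
        intro u v huv
        rcases eq_or_ne (idx u) (idx v) with hiv | hiv
        · have hv : v ∈ P (idx u) := hiv ▸ hidx v
          have hne : f (idx u) ⟨u, hidx u⟩ ≠ f (idx u) ⟨v, hv⟩ :=
            (f (idx u)).valid (by simpa using huv)
          refine ⟨?_, Or.inl hiv⟩
          intro hEq
          rw [Feq v (idx u) hiv.symm] at hEq
          obtain ⟨-, h2⟩ := Sigma.mk.inj_iff.mp hEq
          exact hne (eq_of_heq h2)
        · refine ⟨fun hEq => hiv (congrArg Sigma.fst hEq), Or.inr ?_⟩
          intro a ha b hb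
          rcases hhom (idx u) (idx v) hiv with h | h
          · exact h a ha b hb
          · exact absurd huv (h u (hidx u) v (hidx v))
      exact ⟨SimpleGraph.Coloring.mk (fun v => C' (F v))
        (fun {u v} huv h => (C'.valid (hF u v huv)) h)⟩
  have hsub : Set.ofPred G'.Colorable = Set.ofPred G.Colorable := Set.ext fun n => (key n).symm
  rw [SimpleGraph.chromaticNumber_eq_biInf, SimpleGraph.chromaticNumber_eq_biInf, hsub]
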